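/- Let a : ℕ → ℝ be nondecreasing with a(n) → ∞ as n → ∞. Suppose that for every ε ∈ (0,1) there exists N such that a(2n) ≥ (2 − ε) · a(n) for all n ≥ N. Then for every δ ∈ (0,1), a(n)/n^δ → ∞ as n → ∞. -/

import Mathlib

/-- Let `a : ℕ → ℝ` be nondecreasing (on positive integers) with
`a(n) → ∞`. Suppose that for every `ε ∈ (0,1)` there exists `N` such that
`a(2n) ≥ (2 - ε) a(n)` for all `n ≥ N`. Then for every `δ ∈ (0,1)`,
`a(n) / n^δ → ∞`. -/
theorem stmt3 (a : ℕ → ℝ)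
    (hmono : ∀ m n : ℕ, 1 ≤ m → m ≤ n → a m ≤ a n)
    (htop : Filter.Tendsto a Filter.atTop Filter.atTop)
    (hdouble : ∀ ε : ℝ, 0 < ε → ε < 1 →
      ∃ N : ℕ, ∀ n : ℕ, N ≤ n → (2 - ε) * a n ≤ a (2 * n)) :
    ∀ δ : ℝ, 0 < δ → δ < 1 →
      Filter.Tendsto (fun n : ℕ => a n / (n : ℝ) ^ δ) Filter.atTop Filter.atTop := by
  intro δ hδ0 hδ1
  set δ' : ℝ := (δ + 1) / 2 with hδ'def
  have hδ'0 : 0 < δ' := by rw [hδ'def]; linarith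
  have hδ'1 : δ' < 1 := by rw [hδ'def]; linarith
  have hδδ' : δ < δ' := by rw [hδ'def]; linarith
  have h1lt : (1:ℝ) < (2:ℝ) ^ δ' :=
    Real.one_lt_rpow_iff_of_pos (by norm_num) |>.mpr (Or.inl ⟨by norm_num, hδ'0⟩)
  have hlt2 : (2:ℝ) ^ δ' < 2 := by
    calc (2:ℝ) ^ δ' < (2:ℝ) ^ (1:ℝ) :=
          Real.rpow_lt_rpow_left_iff (by norm_num) |>.mpr hδ'1
    _ = 2 := Real.rpow_one 2
  obtain ⟨N, hN⟩ := hdouble (2 - (2:ℝ) ^ δ') (by linarith) (by linarith)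
  obtain ⟨N₁, hN₁⟩ := Filter.eventually_atTop.mp (htop.eventually_ge_atTop 1)
  set N₀ : ℕ := max N N₁ + 1 with hN₀def
  have hN₀1 : 1 ≤ N₀ := by omega
  have hNN₀ : N ≤ N₀ := by omega
  have haN₀ : 1 ≤ a N₀ := hN₁ N₀ (by omega)
  -- key growth lemma
  have key : ∀ k : ℕ, ((2:ℝ) ^ δ') ^ k * a N₀ ≤ a (2 ^ k * N₀) := by
    intro k
    induction k with
    | zero => simp
    | succ k ih =>
      have hle : N ≤ 2 ^ k * N₀ := le_trans hNN₀ (Nat.le_mul_of_pos_left _ (pow_pos (by norm_num) k))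
      have h2 := hN (2 ^ k * N₀) hle
      have heq : 2 ^ (k + 1) * N₀ = 2 * (2 ^ k * N₀) := by ring
      rw [heq]
      have h2δpos : (0:ℝ) < (2:ℝ) ^ δ' := by linarith
      calc ((2:ℝ) ^ δ') ^ (k + 1) * a N₀ = (2:ℝ) ^ δ' * (((2:ℝ) ^ δ') ^ k * a N₀) := by ring
        _ ≤ (2:ℝ) ^ δ' * a (2 ^ k * N₀) := by
            exact mul_le_mul_of_nonneg_left ih (le_of_lt h2δpos)
        _ = (2 - (2 - (2:ℝ) ^ δ')) * a (2 ^ k * N₀) := by ring_nf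
        _ ≤ a (2 * (2 ^ k * N₀)) := h2
  set C : ℝ := ((2 * N₀ : ℕ) : ℝ) ^ δ' with hCdef
  have hCpos : 0 < C := by
    apply Real.rpow_pos_of_pos
    have : 0 < 2 * N₀ := by omega
    exact_mod_cast this
  -- main pointwise bound
  have main : ∀ n : ℕ, N₀ ≤ n → (n : ℝ) ^ δ' / C ≤ a n := by
    intro n hn
    have hN₀pos : 0 < N₀ := hN₀1
    set k : ℕ := Nat.log 2 (n / N₀) with hkdef
    have hdiv1 : 1 ≤ n / N₀ := (Nat.one_le_div_iff hN₀pos).mpr hn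
    have hlow : 2 ^ k * N₀ ≤ n := by
      have h1 : 2 ^ k ≤ n / N₀ := Nat.pow_log_le_self 2 (by omega)
      calc 2 ^ k * N₀ ≤ (n / N₀) * N₀ := Nat.mul_le_mul_right _ h1
        _ ≤ n := Nat.div_mul_le_self n N₀
    have hhigh : n < 2 ^ (k + 1) * N₀ := by
      have h1 : n / N₀ < 2 ^ (k + 1) := Nat.lt_pow_succ_log_self (by norm_num) _
      exact (Nat.div_lt_iff_lt_mul hN₀pos).mp h1
    have h1' : a (2 ^ k * N₀) ≤ a n := hmono _ _ (le_trans hN₀1 (Nat.le_mul_of_pos_left _ (pow_pos (by norm_num) k))) hlow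
    have h2' : ((2:ℝ) ^ δ') ^ k ≤ a n := by
      calc ((2:ℝ) ^ δ') ^ k = ((2:ℝ) ^ δ') ^ k * 1 := by ring
        _ ≤ ((2:ℝ) ^ δ') ^ k * a N₀ := by
            apply mul_le_mul_of_nonneg_left haN₀
            positivity
        _ ≤ a (2 ^ k * N₀) := key k
        _ ≤ a n := h1'
    -- now (n : ℝ)^δ' / C ≤ (2^δ')^k
    have hnlt : (n : ℝ) < ((2 ^ (k + 1) * N₀ : ℕ) : ℝ) := by exact_mod_cast hhigh
    have hbound : (n : ℝ) ^ δ' ≤ (((2 ^ (k + 1) * N₀ : ℕ) : ℝ)) ^ δ' :=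
      Real.rpow_le_rpow (Nat.cast_nonneg n) (le_of_lt hnlt) (le_of_lt hδ'0)
    have heq2 : (((2 ^ (k + 1) * N₀ : ℕ) : ℝ)) ^ δ' = ((2:ℝ) ^ δ') ^ k * C := by
      have hcast : ((2 ^ (k + 1) * N₀ : ℕ) : ℝ) = (2:ℝ) ^ k * ((2 * N₀ : ℕ) : ℝ) := by
        push_cast; ring
      rw [hcast, Real.mul_rpow (by positivity) (Nat.cast_nonneg _)]
      rw [← Real.rpow_natCast (2:ℝ) k, ← Real.rpow_mul (by norm_num),
        mul_comm (k:ℝ) δ', Real.rpow_mul (by norm_num), Real.rpow_natCast]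
    rw [div_le_iff₀ hCpos]
    calc (n : ℝ) ^ δ' ≤ ((2:ℝ) ^ δ') ^ k * C := heq2 ▸ hbound
      _ ≤ a n * C := by
        apply mul_le_mul_of_nonneg_right h2' (le_of_lt hCpos)
  -- conclude
  have hcomp : Filter.Tendsto (fun n : ℕ => (n : ℝ) ^ (δ' - δ) / C) Filter.atTop Filter.atTop := by
    apply Filter.Tendsto.atTop_div_const hCpos
    exact (tendsto_rpow_atTop (by linarith)).comp tendsto_natCast_atTop_atTop
  apply Filter.tendsto_atTop_mono' _ _ hcomp
  filter_upwards [Filter.eventually_ge_atTop N₀] with n hn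
  have hnpos : (0:ℝ) < (n : ℝ) := by
    have : 0 < n := by omega
    exact_mod_cast this
  have hδpow : (0:ℝ) < (n : ℝ) ^ δ := Real.rpow_pos_of_pos hnpos δ
  have hsplit : (n : ℝ) ^ (δ' - δ) / C = ((n : ℝ) ^ δ' / C) / (n : ℝ) ^ δ := by
    rw [Real.rpow_sub hnpos]
    ring
  rw [hsplit]
  gcongr
  exact main n hn
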